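/- Let (Q,σ) be a symmetric quiver whose underlying quiver is connected and has no oriented cycles. If there are two distinct arrows of the form x → σ(x) and y → σ(y) with x ≠ y, then Q contains a cycle (in the underlying graph); hence a connected symmetric quiver without cycles has at most one arrow of the form x → σ(x). -/

import Mathlib

open SimpleGraph

lemma aux_walk {V : Type*} (G G' : SimpleGraph V) (x x' : V)
    (hsub : ∀ u v, G.Adj u v → (u = x ∧ v = x') ∨ (u = x' ∧ v = x) ∨ G'.Adj u v) :
    ∀ {u v : V}, G.Walk u v →
      G'.Reachable u v ∨ (G'.Reachable u x ∧ G'.Reachable x' v) ∨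
        (G'.Reachable u x' ∧ G'.Reachable x v) := by
  intro u v w
  induction w with
  | nil => exact Or.inl (Reachable.refl _)
  | cons had p ih =>
    rename_i u w v
    rcases hsub _ _ had with ⟨h1, h2⟩ | ⟨h1, h2⟩ | h3
    · subst h1; subst h2
      rcases ih with h | ⟨h1, h2⟩ | ⟨h1, h2⟩
      · exact Or.inr (Or.inl ⟨Reachable.refl _, h⟩)
      · exact Or.inl (h1.symm.trans h2)
      · exact Or.inl h2
    · subst h1; subst h2
      rcases ih with h | ⟨h1, h2⟩ | ⟨h1, h2⟩
      · exact Or.inr (Or.inr ⟨Reachable.refl _, h⟩)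
      · exact Or.inl h2
      · exact Or.inl (h1.symm.trans h2)
    · have hr : G'.Reachable u w := h3.reachable
      rcases ih with h | ⟨h1, h2⟩ | ⟨h1, h2⟩
      · exact Or.inl (hr.trans h)
      · exact Or.inr (Or.inl ⟨hr.trans h1, h2⟩)
      · exact Or.inr (Or.inr ⟨hr.trans h1, h2⟩)

theorem stmt5 {Q0 Q1 : Type*}
    (t h : Q1 → Q0) (σ0 : Q0 → Q0) (σ1 : Q1 → Q1)
    (hσ0 : Function.Involutive σ0) (hσ1 : Function.Involutive σ1)
    (hta : ∀ a, t (σ1 a) = σ0 (h a)) (hha : ∀ a, h (σ1 a) = σ0 (t a))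
    (hnoc : ∀ x : Q0, ¬ Relation.TransGen (fun u v => ∃ c : Q1, t c = u ∧ h c = v) x x)
    (hconn : (SimpleGraph.fromRel (fun u v : Q0 => ∃ c : Q1, t c = u ∧ h c = v)).Connected)
    (a b : Q1) (ha : h a = σ0 (t a)) (hb : h b = σ0 (t b)) (hab : t a ≠ t b) :
    ¬ (SimpleGraph.fromRel (fun u v : Q0 => ∃ c : Q1, t c = u ∧ h c = v)).IsAcyclic := by
  intro hac
  set r : Q0 → Q0 → Prop := fun u v => ∃ c : Q1, t c = u ∧ h c = v with hr
  set G := SimpleGraph.fromRel r with hG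
  set x := t a with hx
  set y := t b with hy
  -- x ≠ σ0 x
  have hxne : x ≠ σ0 x := by
    intro hxx
    exact hnoc x (Relation.TransGen.single ⟨a, rfl, by rw [ha, ← hxx]⟩)
  have hyne : y ≠ σ0 y := by
    intro hyy
    exact hnoc y (Relation.TransGen.single ⟨b, rfl, by rw [hb, ← hyy]⟩)
  -- y ≠ σ0 x
  have hyx : y ≠ σ0 x := by
    intro hyy
    refine hnoc x (Relation.TransGen.head ⟨a, rfl, ha⟩ (Relation.TransGen.single ⟨b, ?_, ?_⟩))
    · rw [← hy, hyy]
    · rw [hb, hyy, hσ0]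
  -- σ0 preserves r reversed
  have hrσ : ∀ u v, r u v → r (σ0 v) (σ0 u) := by
    rintro u v ⟨c, hc1, hc2⟩
    exact ⟨σ1 c, by rw [hta, hc2], by rw [hha, hc1]⟩
  have hGσ : ∀ u v, G.Adj u v → G.Adj (σ0 u) (σ0 v) := by
    rintro u v ⟨hne, hor⟩
    refine ⟨fun hc => hne (hσ0.injective hc), ?_⟩
    rcases hor with h1 | h1
    · exact Or.inr (hrσ _ _ h1)
    · exact Or.inl (hrσ _ _ h1)
  have hadjx : G.Adj x (σ0 x) := ⟨hxne, Or.inl ⟨a, rfl, ha⟩⟩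
  have hadjy : G.Adj y (σ0 y) := ⟨hyne, Or.inl ⟨b, rfl, hb⟩⟩
  set G' := G \ SimpleGraph.fromEdgeSet {s(x, σ0 x)} with hG'
  have hbridge : ¬ G'.Reachable x (σ0 x) :=
    ((SimpleGraph.isBridge_iff).mp
      ((SimpleGraph.isAcyclic_iff_forall_adj_isBridge.mp hac) hadjx))
  -- G' adjacency characterization
  have hG'adj : ∀ u v, G'.Adj u v ↔ G.Adj u v ∧ s(u, v) ≠ s(x, σ0 x) := by
    intro u v
    constructor
    · rintro ⟨h1, h2⟩
      refine ⟨h1, fun hc => h2 ⟨by simp [hc], h1.ne⟩⟩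
    · rintro ⟨h1, h2⟩
      exact ⟨h1, by simp [h2]⟩
  -- σ0 preserves G'
  have hG'σ : ∀ u v, G'.Adj u v → G'.Adj (σ0 u) (σ0 v) := by
    intro u v huv
    rw [hG'adj] at huv ⊢
    refine ⟨hGσ _ _ huv.1, fun hc => huv.2 ?_⟩
    rw [Sym2.eq_iff] at hc ⊢
    rcases hc with ⟨h1, h2⟩ | ⟨h1, h2⟩
    · right
      exact ⟨by rw [← h1, hσ0], hσ0.injective h2⟩
    · left
      exact ⟨hσ0.injective h1, by rw [← h2, hσ0]⟩
  -- hom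
  let f : G' →g G' := ⟨σ0, fun {u v} huv => hG'σ u v huv⟩
  have hmap : ∀ u v, G'.Reachable u v → G'.Reachable (σ0 u) (σ0 v) := by
    intro u v huv
    exact huv.map f
  -- edge y ~ σ0 y in G'
  have hyG' : G'.Adj y (σ0 y) := by
    rw [hG'adj]
    refine ⟨hadjy, fun hc => ?_⟩
    rw [Sym2.eq_iff] at hc
    rcases hc with ⟨h1, h2⟩ | ⟨h1, h2⟩
    · exact hab h1.symm
    · exact hyx h1
  -- split lemma
  have hsub : ∀ u v, G.Adj u v → (u = x ∧ v = σ0 x) ∨ (u = σ0 x ∧ v = x) ∨ G'.Adj u v := by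
    intro u v huv
    by_cases hc : s(u, v) = s(x, σ0 x)
    · rw [Sym2.eq_iff] at hc
      tauto
    · exact Or.inr (Or.inr ((hG'adj u v).mpr ⟨huv, hc⟩))
  obtain ⟨w⟩ := (hconn x y)
  rcases aux_walk G G' x (σ0 x) hsub w with hcase | ⟨h1, h2⟩ | ⟨h1, h2⟩
  · -- x reach y; y adj σ0 y; σ0 map of hcase : σ0 x reach σ0 y
    exact hbridge (hcase.trans ((hyG'.reachable).trans (hmap _ _ hcase).symm))
  · -- x reach x, σ0 x reach y
    -- σ0 map of h2 : x reach σ0 y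
    have h3 : G'.Reachable x (σ0 y) := by
      have := hmap _ _ h2
      rwa [hσ0] at this
    exact hbridge ((h3.trans hyG'.reachable.symm).trans h2.symm)
  · -- x reach σ0 x directly
    exact hbridge h1
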